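/- Let E be a real normed vector space and Δ ⊆ E a convex compact subset. For each natural number N, fix an integer p_N ≥ 1, points τ_{1,N}, …, τ_{p_N,N} ∈ Δ, and weights α_{1,N}, …, α_{p_N,N} ∈ [0,1] with Σ_{i=1}^{p_N} α_{i,N} = 1, and let B_N := Σ_{i=1}^{p_N} α_{i,N}·τ_{i,N}. Let τ ∈ Δ be an extreme point of Δ, and suppose B_N → τ as N → ∞. Then for every ε > 0, the total weight of points outside the ε-ball around τ vanishes: Σ_{i : ‖τ_{i,N} − τ‖ ≥ ε} α_{i,N} → 0 as N → ∞. -/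

import Mathlib

open Filter Topology Set


/-- An extreme point that is a finite convex combination of points of `Δ` must equal one of
the points with positive weight. -/
lemma extreme_combo {E : Type*} [NormedAddCommGroup E] [NormedSpace ℝ E]
    {Δ : Set E} (hConv : Convex ℝ Δ) {τ : E}
    (hext : ∀ x ∈ Δ, ∀ y ∈ Δ, ∀ t : ℝ, 0 < t → t < 1 →
      τ = t • x + (1 - t) • y → x = τ ∧ y = τ)
    {ι : Type*} (s : Finset ι) (t : ι → ℝ) (x : ι → E)
    (ht0 : ∀ i ∈ s, 0 ≤ t i) (ht1 : ∑ i ∈ s, t i = 1)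
    (hx : ∀ i ∈ s, x i ∈ Δ) (heq : τ = ∑ i ∈ s, t i • x i) :
    ∃ i ∈ s, 0 < t i ∧ x i = τ := by
  classical
  induction s using Finset.induction_on with
  | empty => simp at ht1
  | @insert j s' hj ih =>
    rw [Finset.sum_insert hj] at ht1 heq
    by_cases h0 : t j = 0
    · rw [h0, zero_add] at ht1
      rw [h0, zero_smul, zero_add] at heq
      obtain ⟨i, hi, hpos, hxi⟩ := ih (fun i hi => ht0 i (Finset.mem_insert_of_mem hi)) ht1
        (fun i hi => hx i (Finset.mem_insert_of_mem hi)) heq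
      exact ⟨i, Finset.mem_insert_of_mem hi, hpos, hxi⟩
    by_cases h1 : t j = 1
    · have hzero : ∀ i ∈ s', t i = 0 := by
        have hs0 : ∑ i ∈ s', t i = 0 := by rw [h1] at ht1; linarith
        exact fun i hi => le_antisymm
          (by
            have := Finset.sum_le_sum_of_subset_of_nonneg
              (Finset.singleton_subset_iff.2 hi)
              (fun k hk _ => ht0 k (Finset.mem_insert_of_mem hk))
            simp only [Finset.sum_singleton] at this
            linarith)
          (ht0 i (Finset.mem_insert_of_mem hi))
      have : ∑ i ∈ s', t i • x i = 0 :=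
        Finset.sum_eq_zero fun i hi => by rw [hzero i hi, zero_smul]
      rw [this, add_zero, h1, one_smul] at heq
      exact ⟨j, Finset.mem_insert_self _ _, by rw [h1]; norm_num, heq.symm⟩
    · have htj0 : 0 < t j := lt_of_le_of_ne (ht0 j (Finset.mem_insert_self _ _)) (Ne.symm h0)
      have hs'0 : 0 ≤ ∑ i ∈ s', t i :=
        Finset.sum_nonneg fun i hi => ht0 i (Finset.mem_insert_of_mem hi)
      have htj1 : t j < 1 := lt_of_le_of_ne (by linarith) h1
      set c : ℝ := 1 - t j with hc
      have hcpos : 0 < c := by simp [hc]; linarith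
      set y : E := c⁻¹ • ∑ i ∈ s', t i • x i with hy
      have hyΔ : y ∈ Δ := by
        have hyeq : y = ∑ i ∈ s', (c⁻¹ * t i) • x i := by
          rw [hy, Finset.smul_sum]; simp [smul_smul]
        rw [hyeq]
        exact hConv.sum_mem
          (fun i hi => mul_nonneg (inv_nonneg.2 hcpos.le) (ht0 i (Finset.mem_insert_of_mem hi)))
          (by rw [← Finset.mul_sum]; field_simp; linarith)
          (fun i hi => hx i (Finset.mem_insert_of_mem hi))
      have hdecomp : τ = t j • x j + c • y := by
        rw [hy, smul_smul, mul_inv_cancel₀ hcpos.ne', one_smul, heq]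
      exact ⟨j, Finset.mem_insert_self _ _, htj0,
        (hext (x j) (hx j (Finset.mem_insert_self _ _)) y hyΔ (t j) htj0 htj1
          (by rw [hdecomp, hc])).1⟩

/-- Milman-type statement: an extreme point of a compact convex set is not in the closed
convex hull of the part of the set lying at distance at least `ε` from it. -/
lemma milman_local {E : Type*} [NormedAddCommGroup E] [NormedSpace ℝ E]
    {Δ : Set E} (hConv : Convex ℝ Δ) (hComp : IsCompact Δ) {τ : E}
    (hext : ∀ x ∈ Δ, ∀ y ∈ Δ, ∀ t : ℝ, 0 < t → t < 1 →
      τ = t • x + (1 - t) • y → x = τ ∧ y = τ)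
    {ε : ℝ} (hε : 0 < ε) :
    τ ∉ closure (convexHull ℝ (Δ ∩ {z | ε ≤ ‖z - τ‖})) := by
  classical
  set S : Set E := Δ ∩ {z | ε ≤ ‖z - τ‖} with hS
  have hSΔ : S ⊆ Δ := inter_subset_left
  have hScomp : IsCompact S :=
    hComp.inter_right (isClosed_le continuous_const ((continuous_id.sub continuous_const).norm))
  have hcover : S ⊆ ⋃ z ∈ S, Metric.ball z (ε / 4) := fun z hz =>
    mem_biUnion hz (Metric.mem_ball_self (by positivity))
  obtain ⟨F0, hF0S, hF0fin, hcov⟩ :=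
    hScomp.elim_finite_subcover_image (fun z _ => Metric.isOpen_ball) hcover
  haveI : Fintype ↥F0 := hF0fin.fintype
  set C : ↥F0 → Set E := fun z =>
    closure (convexHull ℝ (S ∩ Metric.closedBall (z : E) (ε / 4))) with hC
  have hCsub : ∀ z, C z ⊆ Metric.closedBall (z : E) (ε / 4) := fun z =>
    closure_minimal (convexHull_min inter_subset_right (convex_closedBall _ _))
      Metric.isClosed_closedBall
  have hCΔ : ∀ z, C z ⊆ Δ := fun z =>
    closure_minimal (convexHull_min (inter_subset_left.trans hSΔ) hConv) hComp.isClosed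
  have hCconv : ∀ z, Convex ℝ (C z) := fun z => (convex_convexHull ℝ _).closure
  have hCcomp : ∀ z, IsCompact (C z) := fun z =>
    hComp.of_isClosed_subset isClosed_closure (hCΔ z)
  have hCne : ∀ z : ↥F0, (z : E) ∈ C z := fun z =>
    subset_closure (subset_convexHull ℝ _ ⟨hF0S z.2, Metric.mem_closedBall_self (by positivity)⟩)
  set T : Set E :=
    (fun p : (↥F0 → ℝ) × (↥F0 → E) => ∑ i, p.1 i • p.2 i) ''
      ((stdSimplex ℝ ↥F0) ×ˢ Set.univ.pi C) with hT
  have hTcomp : IsCompact T := by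
    refine ((isCompact_stdSimplex (𝕜 := ℝ) (ι := ↥F0)).prod (isCompact_univ_pi hCcomp)).image ?_
    exact continuous_finset_sum _ fun i _ =>
      ((continuous_apply i).comp continuous_fst).smul ((continuous_apply i).comp continuous_snd)
  have hTconv : Convex ℝ T := by
    rintro _ ⟨⟨t, f⟩, ⟨htS, hf⟩, rfl⟩ _ ⟨⟨s, g⟩, ⟨hsS, hg⟩, rfl⟩ a b ha hb hab
    simp only [mem_univ_pi] at hf hg
    set r : ↥F0 → ℝ := fun i => a * t i + b * s i with hr
    have hrnn : ∀ i, 0 ≤ r i := fun i =>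
      add_nonneg (mul_nonneg ha (htS.1 i)) (mul_nonneg hb (hsS.1 i))
    set v : ↥F0 → E := fun i => (a * t i) • f i + (b * s i) • g i with hv
    set h : ↥F0 → E := fun i => if r i = 0 then f i else (r i)⁻¹ • v i with hh
    have hkey : ∀ i, r i • h i = v i := by
      intro i
      by_cases h0 : r i = 0
      · have h0' : a * t i + b * s i = 0 := h0
        have hat : 0 ≤ a * t i := mul_nonneg ha (htS.1 i)
        have hbs : 0 ≤ b * s i := mul_nonneg hb (hsS.1 i)
        have h1a : a * t i = 0 := by linarith
        have h1b : b * s i = 0 := by linarith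
        simp [hh, h0, hv, h1a, h1b]
      · simp [hh, h0, smul_smul, mul_inv_cancel₀ h0]
    have hhC : ∀ i, h i ∈ C i := by
      intro i
      by_cases h0 : r i = 0
      · simpa [hh, h0] using hf i
      · have hrpos : 0 < r i := lt_of_le_of_ne (hrnn i) (Ne.symm h0)
        have : h i = (a * t i / r i) • f i + (b * s i / r i) • g i := by
          simp [hh, h0, hv, smul_add, smul_smul, div_eq_inv_mul]
        rw [this]
        exact hCconv i (hf i) (hg i) (div_nonneg (mul_nonneg ha (htS.1 i)) (hrnn i))
          (div_nonneg (mul_nonneg hb (hsS.1 i)) (hrnn i))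
          (by rw [← add_div]; exact div_self h0)
    refine ⟨(r, h), ⟨⟨hrnn, ?_⟩, fun i _ => hhC i⟩, ?_⟩
    · simp only [hr, Finset.sum_add_distrib, ← Finset.mul_sum, htS.2, hsS.2, mul_one]
      exact hab
    · calc ∑ i, r i • h i = ∑ i, v i := by simp [hkey]
        _ = a • ∑ i, t i • f i + b • ∑ i, s i • g i := by
            rw [Finset.smul_sum, Finset.smul_sum, ← Finset.sum_add_distrib]
            exact Finset.sum_congr rfl fun i _ => by rw [hv]; simp [smul_smul]
  have hST : S ⊆ T := by
    intro s₀ hs₀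
    obtain ⟨z, hzF0, hzball⟩ := mem_iUnion₂.1 (hcov hs₀)
    set z₀ : ↥F0 := ⟨z, hzF0⟩ with hz₀
    refine ⟨(fun i => if i = z₀ then (1 : ℝ) else 0, fun i => if i = z₀ then s₀ else (i : E)),
      ⟨⟨fun i => by positivity, by simp⟩, fun i _ => ?_⟩, ?_⟩
    · by_cases hi : i = z₀
      · simp only [hi, if_pos rfl]
        exact subset_closure (subset_convexHull ℝ _
          ⟨hs₀, Metric.ball_subset_closedBall hzball⟩)
      · simpa [hi] using hCne i
    · show (∑ i : ↥F0, (if i = z₀ then (1 : ℝ) else 0) • (if i = z₀ then s₀ else (i : E))) = s₀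
      rw [Finset.sum_eq_single_of_mem z₀ (Finset.mem_univ _)
        (fun i _ hi => by simp [hi])]
      simp
  have hKT : closure (convexHull ℝ S) ⊆ T :=
    closure_minimal (convexHull_min hST hTconv) hTcomp.isClosed
  intro hmem
  obtain ⟨⟨t, g⟩, ⟨htS, hg⟩, heq⟩ := hKT hmem
  simp only [mem_univ_pi] at hg
  obtain ⟨i, -, hpos, hgi⟩ := extreme_combo hConv hext Finset.univ t g
    (fun i _ => htS.1 i) htS.2 (fun i _ => hCΔ i (hg i)) heq.symm
  have h1 : ‖τ - (i : E)‖ ≤ ε / 4 := by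
    have := hCsub i (hgi ▸ hg i)
    simpa [Metric.mem_closedBall, dist_eq_norm] using this
  have h2 : ε ≤ ‖(i : E) - τ‖ := (hF0S i.2).2
  rw [norm_sub_rev] at h1
  linarith

/-- If the barycenters of weighted points in a convex compact subset of a normed space
converge to an extreme point, then for every `ε > 0` the total weight of the points
lying outside the `ε`-ball around the extreme point tends to `0`. -/
theorem weight_outside_ball_tendsto_zero
    {E : Type*} [NormedAddCommGroup E] [NormedSpace ℝ E]
    (Δ : Set E) (hConv : Convex ℝ Δ) (hComp : IsCompact Δ)
    (p : ℕ → ℕ) (hp : ∀ N, 1 ≤ p N)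
    (τpt : ∀ N : ℕ, Fin (p N) → E) (hτpt : ∀ N i, τpt N i ∈ Δ)
    (α : ∀ N : ℕ, Fin (p N) → ℝ)
    (hα : ∀ N i, α N i ∈ Set.Icc (0 : ℝ) 1)
    (hsum : ∀ N, ∑ i, α N i = 1)
    (τ : E) (hτ : τ ∈ Δ)
    (hext : ∀ x ∈ Δ, ∀ y ∈ Δ, ∀ t : ℝ, 0 < t → t < 1 →
      τ = t • x + (1 - t) • y → x = τ ∧ y = τ)
    (hB : Tendsto (fun N => ∑ i, α N i • τpt N i) atTop (𝓝 τ)) :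
    ∀ ε : ℝ, 0 < ε →
      Tendsto (fun N => ∑ i ∈ Finset.univ.filter (fun i => ε ≤ ‖τpt N i - τ‖), α N i)
        atTop (𝓝 0) := by
  classical
  intro ε hε
  set S : Set E := Δ ∩ {z | ε ≤ ‖z - τ‖} with hSdef
  have hSΔ : S ⊆ Δ := inter_subset_left
  have hKτ : τ ∉ closure (convexHull ℝ S) := milman_local hConv hComp hext hε
  have hKΔ : convexHull ℝ S ⊆ Δ := convexHull_min hSΔ hConv
  set far : ∀ N, Finset (Fin (p N)) :=
    fun N => Finset.univ.filter (fun i => ε ≤ ‖τpt N i - τ‖) with hfar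
  set w : ℕ → ℝ := fun N => ∑ i ∈ far N, α N i with hw
  -- basic bounds on w
  have hw0 : ∀ N, 0 ≤ w N := fun N => Finset.sum_nonneg fun i _ => (hα N i).1
  have hw1 : ∀ N, w N ≤ 1 := fun N => by
    rw [← hsum N]
    exact Finset.sum_le_sum_of_subset_of_nonneg (Finset.filter_subset _ _)
      (fun i _ _ => (hα N i).1)
  -- the far and near barycenters
  set x : ℕ → E := fun N =>
    if h : 0 < w N then (w N)⁻¹ • ∑ i ∈ far N, α N i • τpt N i else τ with hx
  set y : ℕ → E := fun N =>
    if h : w N < 1 then (1 - w N)⁻¹ • ∑ i ∈ Finset.univ \ far N, α N i • τpt N i else τ with hy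
  have hnear : ∀ N, ∑ i ∈ Finset.univ \ far N, α N i = 1 - w N := fun N => by
    have := Finset.sum_sdiff_eq_sub (f := α N) (Finset.subset_univ (far N))
    rw [this, hsum N]
  have hxhull : ∀ N, 0 < w N → x N ∈ convexHull ℝ S := by
    intro N hN
    have hxeq : x N = ∑ i ∈ far N, ((w N)⁻¹ * α N i) • τpt N i := by
      rw [hx]; simp only [dif_pos hN, Finset.smul_sum, smul_smul]
    rw [hxeq]
    refine (convex_convexHull ℝ S).sum_mem
      (fun i _ => mul_nonneg (inv_nonneg.2 (hw0 N)) ((hα N i).1))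
      (by rw [← Finset.mul_sum]; exact inv_mul_cancel₀ hN.ne')
      (fun i hi => subset_convexHull ℝ S ⟨hτpt N i, ?_⟩)
    exact (Finset.mem_filter.1 hi).2
  have hxΔ : ∀ N, x N ∈ Δ := by
    intro N
    by_cases hN : 0 < w N
    · exact hKΔ (hxhull N hN)
    · rw [hx]; simp only [dif_neg hN]; exact hτ
  have hyΔ : ∀ N, y N ∈ Δ := by
    intro N
    by_cases hN : w N < 1
    · have hyeq : y N = ∑ i ∈ Finset.univ \ far N, ((1 - w N)⁻¹ * α N i) • τpt N i := by
        rw [hy]; simp only [dif_pos hN, Finset.smul_sum, smul_smul]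
      rw [hyeq]
      refine hConv.sum_mem
        (fun i _ => mul_nonneg (inv_nonneg.2 (by linarith)) ((hα N i).1))
        (by rw [← Finset.mul_sum, hnear N, inv_mul_cancel₀ (by linarith)])
        (fun i _ => hτpt N i)
    · rw [hy]; simp only [dif_neg hN]; exact hτ
  -- decomposition of the barycenter
  have hdecomp : ∀ N, (∑ i, α N i • τpt N i) = w N • x N + (1 - w N) • y N := by
    intro N
    have hfarpart : w N • x N = ∑ i ∈ far N, α N i • τpt N i := by
      by_cases hN : 0 < w N
      · rw [hx]; simp only [dif_pos hN, smul_smul, mul_inv_cancel₀ hN.ne', one_smul]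
      · have hN0 : w N = 0 := le_antisymm (not_lt.1 hN) (hw0 N)
        have hall : ∀ i ∈ far N, α N i = 0 := by
          intro i hi
          exact (Finset.sum_eq_zero_iff_of_nonneg (fun i _ => (hα N i).1)).1 hN0 i hi
        rw [hN0, zero_smul, Finset.sum_eq_zero fun i hi => by rw [hall i hi, zero_smul]]
    have hnearpart : (1 - w N) • y N = ∑ i ∈ Finset.univ \ far N, α N i • τpt N i := by
      by_cases hN : w N < 1
      · rw [hy]
        simp only [dif_pos hN, smul_smul, mul_inv_cancel₀ (sub_ne_zero.2 hN.ne'), one_smul]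
      · have hN1 : w N = 1 := le_antisymm (hw1 N) (not_lt.1 hN)
        have hs0 : ∑ i ∈ Finset.univ \ far N, α N i = 0 := by rw [hnear N, hN1, sub_self]
        have hall : ∀ i ∈ Finset.univ \ far N, α N i = 0 :=
          (Finset.sum_eq_zero_iff_of_nonneg (fun i _ => (hα N i).1)).1 hs0
        rw [hN1, sub_self, zero_smul,
          Finset.sum_eq_zero fun i hi => by rw [hall i hi, zero_smul]]
    rw [hfarpart, hnearpart, add_comm]
    exact (Finset.sum_sdiff (Finset.subset_univ (far N))).symm
  -- main argument via subsequences
  apply tendsto_of_subseq_tendsto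
  intro ns hns
  -- extract a convergent subsequence of (w, x, y)
  obtain ⟨⟨t₀, x₀, y₀⟩, hmem, φ, hφ, hconv⟩ :=
    ((isCompact_Icc (a := (0:ℝ)) (b := 1)).prod (hComp.prod hComp)).tendsto_subseq
      (x := fun k => (w (ns k), (x (ns k), y (ns k))))
      (fun k => ⟨⟨hw0 _, hw1 _⟩, hxΔ _, hyΔ _⟩)
  have ht : Tendsto (fun k => w (ns (φ k))) atTop (𝓝 t₀) :=
    (continuous_fst.tendsto _).comp hconv
  have hxt : Tendsto (fun k => x (ns (φ k))) atTop (𝓝 x₀) :=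
    ((continuous_fst.comp continuous_snd).tendsto _).comp hconv
  have hyt : Tendsto (fun k => y (ns (φ k))) atTop (𝓝 y₀) :=
    ((continuous_snd.comp continuous_snd).tendsto _).comp hconv
  have ht₀mem : t₀ ∈ Set.Icc (0:ℝ) 1 := hmem.1
  have hx₀Δ : x₀ ∈ Δ := hmem.2.1
  have hy₀Δ : y₀ ∈ Δ := hmem.2.2
  have ht₀ : t₀ = 0 := by
    by_contra h0
    have ht₀pos : 0 < t₀ := lt_of_le_of_ne ht₀mem.1 (Ne.symm h0)
    -- x₀ lies in the closed convex hull of S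
    have hx₀K : x₀ ∈ closure (convexHull ℝ S) := by
      have hev : ∀ᶠ k in atTop, x (ns (φ k)) ∈ convexHull ℝ S := by
        filter_upwards [ht.eventually (eventually_gt_nhds ht₀pos)] with k hk
        exact hxhull _ hk
      exact mem_closure_of_tendsto hxt hev
    -- limit of the barycenters along the subsequence
    have hBsub : Tendsto (fun k => ∑ i, α (ns (φ k)) i • τpt (ns (φ k)) i) atTop (𝓝 τ) :=
      hB.comp (hns.comp hφ.tendsto_atTop)
    have hrhs : Tendsto (fun k => w (ns (φ k)) • x (ns (φ k)) +
        (1 - w (ns (φ k))) • y (ns (φ k))) atTop (𝓝 (t₀ • x₀ + (1 - t₀) • y₀)) :=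
      (ht.smul hxt).add ((tendsto_const_nhds.sub ht).smul hyt)
    have heq : τ = t₀ • x₀ + (1 - t₀) • y₀ := by
      refine tendsto_nhds_unique ?_ hrhs
      exact hBsub.congr fun k => hdecomp (ns (φ k))
    have : x₀ = τ := by
      rcases eq_or_lt_of_le ht₀mem.2 with h1 | h1
      · rw [h1] at heq
        simp at heq
        exact heq.symm
      · exact (hext x₀ hx₀Δ y₀ hy₀Δ t₀ ht₀pos h1 heq).1
    exact hKτ (this ▸ hx₀K)
  refine ⟨φ, ?_⟩
  rw [← ht₀]
  exact ht
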